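/- For any positive integer n, any squarefree positive integer P, and any integer ℓ ≥ 0, the truncated Möbius sums satisfy: ∑_{d ∣ gcd(n,P), ν(d) ≤ 2ℓ+1} μ(d) ≤ ∑_{d ∣ gcd(n,P)} μ(d) ≤ ∑_{d ∣ gcd(n,P), ν(d) ≤ 2ℓ} μ(d) (Brun's Pure Sieve inequality). -/

import Mathlib

open Finset ArithmeticFunction

private lemma sum_divisors_eq_sum_powerset {m : ℕ} (hm : m ≠ 0) (hsq : Squarefree m)
    {α : Type*} [AddCommMonoid α] (f : ℕ → α) :
    ∑ d ∈ m.divisors, f d = ∑ S ∈ m.primeFactors.powerset, f (∏ p ∈ S, p) := by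
  refine Finset.sum_nbij' (fun d => d.primeFactors) (fun S => ∏ p ∈ S, p) ?_ ?_ ?_ ?_ ?_
  · intro d hd
    rw [Finset.mem_powerset]
    exact Nat.primeFactors_mono (Nat.dvd_of_mem_divisors hd) hm
  · intro S hS
    rw [Finset.mem_powerset] at hS
    rw [Nat.mem_divisors]
    exact ⟨(Finset.prod_dvd_prod_of_subset _ _ _ hS).trans (Nat.prod_primeFactors_dvd m), hm⟩
  · intro d hd
    exact Nat.prod_primeFactors_of_squarefree (hsq.squarefree_of_dvd (Nat.dvd_of_mem_divisors hd))
  · intro S hS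
    rw [Finset.mem_powerset] at hS
    exact Nat.primeFactors_prod (fun p hp => Nat.prime_of_mem_primeFactors (hS hp))
  · intro d hd
    rw [Nat.prod_primeFactors_of_squarefree
      (hsq.squarefree_of_dvd (Nat.dvd_of_mem_divisors hd))]

private lemma trunc_sum_eq {m : ℕ} (hm : m ≠ 0) (hsq : Squarefree m) (t : ℕ) :
    ∑ d ∈ m.divisors.filter (fun d => d.primeFactors.card ≤ t), ArithmeticFunction.moebius d
      = ∑ j ∈ Finset.range (t + 1), (-1 : ℤ) ^ j * (m.primeFactors.card.choose j) := by
  rw [Finset.sum_filter, sum_divisors_eq_sum_powerset hm hsq]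
  have key : ∀ S ∈ m.primeFactors.powerset,
      (if (∏ p ∈ S, p).primeFactors.card ≤ t then ArithmeticFunction.moebius (∏ p ∈ S, p) else 0)
        = (if S.card ≤ t then (-1 : ℤ) ^ S.card else 0) := by
    intro S hS
    rw [Finset.mem_powerset] at hS
    have hprime : ∀ p ∈ S, p.Prime := fun p hp => Nat.prime_of_mem_primeFactors (hS hp)
    have hpf : (∏ p ∈ S, p).primeFactors = S := Nat.primeFactors_prod hprime
    have hsqS : Squarefree (∏ p ∈ S, p) :=
      hsq.squarefree_of_dvd
        ((Finset.prod_dvd_prod_of_subset _ _ _ hS).trans (Nat.prod_primeFactors_dvd m))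
    have hcard : ArithmeticFunction.cardFactors (∏ p ∈ S, p) = S.card := by
      rw [← (ArithmeticFunction.cardDistinctFactors_eq_cardFactors_iff_squarefree
          hsqS.ne_zero).2 hsqS, ArithmeticFunction.cardDistinctFactors_apply,
        ← List.card_toFinset, Nat.toFinset_factors, hpf]
    rw [hpf, ArithmeticFunction.moebius_apply_of_squarefree hsqS, hcard]
  rw [Finset.sum_congr rfl key, ← Finset.sum_filter]
  -- fiberwise over card
  rw [← Finset.sum_fiberwise_of_maps_to (g := fun S : Finset ℕ => S.card)
    (t := Finset.range (t + 1)) (fun S hS => by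
      rw [Finset.mem_filter] at hS
      exact Finset.mem_range.2 (Nat.lt_succ_of_le hS.2))]
  refine Finset.sum_congr rfl fun j hj => ?_
  rw [Finset.mem_range] at hj
  have : (m.primeFactors.powerset.filter (fun S => S.card ≤ t)).filter
      (fun S => S.card = j) = Finset.powersetCard j m.primeFactors := by
    rw [Finset.powersetCard_eq_filter, Finset.filter_filter]
    apply Finset.filter_congr
    intro S _
    constructor
    · rintro ⟨_, h⟩; exact h
    · rintro h; exact ⟨h ▸ Nat.lt_succ_iff.1 hj, h⟩
  rw [this]
  rw [Finset.sum_congr rfl (fun S hS => by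
    rw [(Finset.mem_powersetCard.1 hS).2]),
    Finset.sum_const, Finset.card_powersetCard, nsmul_eq_mul, mul_comm]

private lemma binom_sum (k t : ℕ) (hk : 1 ≤ k) :
    ∑ j ∈ Finset.range (t + 1), (-1 : ℤ) ^ j * (k.choose j)
      = (-1) ^ t * ((k - 1).choose t) := by
  induction t with
  | zero => simp
  | succ t ih =>
    rw [Finset.sum_range_succ, ih]
    have hpascal : (k.choose (t + 1) : ℤ) = (k - 1).choose t + (k - 1).choose (t + 1) := by
      obtain ⟨k', rfl⟩ := Nat.exists_eq_add_of_le hk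
      simp [Nat.choose_succ_succ, Nat.add_comm]
    rw [hpascal]
    ring

private lemma binom_sum_zero (t : ℕ) :
    ∑ j ∈ Finset.range (t + 1), (-1 : ℤ) ^ j * ((0 : ℕ).choose j) = 1 := by
  rw [Finset.sum_eq_single 0]
  · simp
  · intro j _ hj
    rw [Nat.choose_eq_zero_of_lt (Nat.pos_of_ne_zero hj)]
    simp
  · simp

theorem brun_pure_sieve (n P ℓ : ℕ) (hn : 0 < n) (hP : Squarefree P) :
    (∑ d ∈ (Nat.gcd n P).divisors.filter (fun d => d.primeFactors.card ≤ 2 * ℓ + 1),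
        ArithmeticFunction.moebius d ≤
      ∑ d ∈ (Nat.gcd n P).divisors, ArithmeticFunction.moebius d) ∧
    (∑ d ∈ (Nat.gcd n P).divisors, ArithmeticFunction.moebius d ≤
      ∑ d ∈ (Nat.gcd n P).divisors.filter (fun d => d.primeFactors.card ≤ 2 * ℓ),
        ArithmeticFunction.moebius d) := by
  have hm' : Nat.gcd n P ≠ 0 := Nat.gcd_pos_of_pos_left P hn |>.ne'
  have hsq : Squarefree (Nat.gcd n P) := hP.squarefree_of_dvd (Nat.gcd_dvd_right n P)
  have hfull : ∑ d ∈ (Nat.gcd n P).divisors, ArithmeticFunction.moebius d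
      = ∑ j ∈ Finset.range ((Nat.gcd n P).primeFactors.card + 1),
          (-1 : ℤ) ^ j * ((Nat.gcd n P).primeFactors.card.choose j) := by
    rw [← trunc_sum_eq hm' hsq]
    congr 1
    rw [Finset.filter_true_of_mem]
    intro d hd
    exact Finset.card_le_card (Nat.primeFactors_mono (Nat.dvd_of_mem_divisors hd) hm')
  rw [hfull, trunc_sum_eq hm' hsq, trunc_sum_eq hm' hsq]
  generalize (Nat.gcd n P).primeFactors.card = k at *
  rcases Nat.eq_zero_or_pos k with hk | hk
  · subst hk
    rw [binom_sum_zero, binom_sum_zero, binom_sum_zero]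
    exact ⟨le_refl 1, le_refl 1⟩
  · rw [binom_sum k _ hk, binom_sum k _ hk, binom_sum k _ hk]
    have hkk : (k - 1).choose k = 0 := Nat.choose_eq_zero_of_lt (Nat.sub_lt hk one_pos)
    rw [hkk]
    constructor
    · rw [pow_succ, pow_mul]
      simp only [neg_one_sq, one_pow, one_mul, Nat.cast_zero, mul_zero, neg_one_mul]
      exact neg_nonpos.2 (Int.natCast_nonneg _)
    · rw [pow_mul]
      simp only [neg_one_sq, one_pow, one_mul, Nat.cast_zero, mul_zero]
      exact Int.natCast_nonneg _
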